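/- Let R be a commutative ring of characteristic p with p-generating set x, let R' = R[X]/(X_i^p − x_i) with classes x'_i and map φ : R' → R as in Gabber's construction, and suppose ψ : S → R' is a ring map where S has a p-generating set y = y_1,...,y_m that ψ maps bijectively onto the p-basis x' of R'. Then ker ψ equals the Frobenius power (ker(φ ∘ ψ))^{[p]}, the ideal generated by p-th powers of elements of ker(φ ∘ ψ). -/

import Mathlib

open MvPolynomial Finset

section Lf
variable {R : Type*} [CommRing R] (p : ℕ) {n : ℕ} (x : Fin n → R)

open Classical in
noncomputable def wfun (f : Fin n → ℕ) (a : Fin n →₀ ℕ) : R :=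
  if (∀ i, a i % p = f i) then ∏ i, x i ^ (a i / p) else 0

noncomputable def Lf (f : Fin n → ℕ) : MvPolynomial (Fin n) R →ₗ[R] R :=
  ((MvPolynomial.basisMonomials (Fin n) R).constr R) (wfun p x f)

lemma Lf_monomial (f : Fin n → ℕ) (a : Fin n →₀ ℕ) (r : R) :
    Lf p x f (monomial a r) = r * wfun p x f a := by
  have : monomial a r = r • monomial a (1 : R) := by
    rw [MvPolynomial.smul_monomial, smul_eq_mul, mul_one]
  rw [this, map_smul, smul_eq_mul]
  congr 1
  have := (MvPolynomial.basisMonomials (Fin n) R).constr_basis R (wfun p x f) a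
  rwa [MvPolynomial.coe_basisMonomials] at this

lemma wfun_add_single (hp : 0 < p) (f : Fin n → ℕ) (a : Fin n →₀ ℕ) (i : Fin n) :
    wfun p x f (a + Finsupp.single i p) = wfun p x f a * x i := by
  classical
  unfold wfun
  have hmod : ∀ j, (a + Finsupp.single i p) j % p = a j % p := by
    intro j
    rcases eq_or_ne j i with rfl | h
    · simp [Nat.add_mod_right]
    · simp [Finsupp.single_apply, Ne.symm h]
  have hdiv : ∀ j, (a + Finsupp.single i p) j / p = a j / p + (if j = i then 1 else 0) := by
    intro j
    rcases eq_or_ne j i with rfl | h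
    · simp [Nat.add_div_right _ hp]
    · simp [Finsupp.single_apply, Ne.symm h, h]
  by_cases hc : ∀ j, a j % p = f j
  · rw [if_pos (by intro j; rw [hmod]; exact hc j), if_pos hc]
    have : ∀ j ∈ Finset.univ, x j ^ ((a + Finsupp.single i p) j / p)
        = x j ^ (a j / p) * (if j = i then x j else 1) := by
      intro j _
      rw [hdiv, pow_add]
      rcases eq_or_ne j i with rfl | h
      · simp
      · simp [h]
    rw [Finset.prod_congr rfl this, Finset.prod_mul_distrib, Finset.prod_ite_eq' Finset.univ i]
    simp
  · rw [if_neg (by intro hcon; exact hc fun j => by rw [← hmod j]; exact hcon j), if_neg hc,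
      zero_mul]

lemma Lf_mul_gen (hp : 0 < p) (f : Fin n → ℕ) (q : MvPolynomial (Fin n) R) (i : Fin n) :
    Lf p x f (q * (X i ^ p - C (x i))) = 0 := by
  induction q using MvPolynomial.induction_on' with
  | monomial a r =>
      rw [mul_sub, map_sub, MvPolynomial.X_pow_eq_monomial,
        MvPolynomial.monomial_mul, mul_one]
      have hc : (monomial a r : MvPolynomial (Fin n) R) * C (x i) = monomial a (r * x i) := by
        rw [MvPolynomial.C_apply, MvPolynomial.monomial_mul, add_zero]
      rw [hc, Lf_monomial, Lf_monomial, wfun_add_single p x hp, sub_eq_zero]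
      ring
  | add q1 q2 h1 h2 =>
      rw [add_mul, map_add, h1, h2, add_zero]

lemma Lf_mem_span (hp : 0 < p) (f : Fin n → ℕ) {z : MvPolynomial (Fin n) R}
    (hz : z ∈ Ideal.span (Set.range fun i => X i ^ p - C (x i))) :
    Lf p x f z = 0 := by
  have key : ∀ z ∈ Ideal.span (Set.range fun i => (X i : MvPolynomial (Fin n) R) ^ p - C (x i)),
      ∀ q : MvPolynomial (Fin n) R, Lf p x f (q * z) = 0 := by
    intro z hz
    refine Submodule.span_induction ?_ ?_ ?_ ?_ hz
    · rintro _ ⟨i, rfl⟩ q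
      exact Lf_mul_gen p x hp f q i
    · intro q; rw [mul_zero, map_zero]
    · intro a b _ _ ha hb q
      rw [mul_add, map_add, ha, hb, add_zero]
    · intro a b _ hb q
      rw [smul_eq_mul, ← mul_assoc, hb]
  have := key z hz 1
  rwa [one_mul] at this

end Lf

section Rep

variable {S : Type*} [CommRing S] (p : ℕ) [Fact p.Prime] [CharP S p]
  {m : ℕ} (y : Fin m → S)


def RepSet : Set S :=
  {s | ∃ c : (Fin m → Fin p) → S, s = ∑ e : Fin m → Fin p, c e ^ p * ∏ j, y j ^ (e j : ℕ)}

lemma repset_single (b : S) (g : Fin m → Fin p) :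
    b ^ p * ∏ j, y j ^ (g j : ℕ) ∈ RepSet p y := by
  classical
  refine ⟨fun h => if h = g then b else 0, ?_⟩
  rw [Finset.sum_eq_single_of_mem g (Finset.mem_univ g)]
  · simp
  · intro h _ hh
    simp [hh, zero_pow (Fact.out (p := p.Prime)).ne_zero]

lemma repset_add {s t : S} (hs : s ∈ RepSet p y) (ht : t ∈ RepSet p y) :
    s + t ∈ RepSet p y := by
  obtain ⟨c, rfl⟩ := hs; obtain ⟨d, rfl⟩ := ht
  refine ⟨fun e => c e + d e, ?_⟩
  rw [← Finset.sum_add_distrib]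
  refine Finset.sum_congr rfl fun e _ => ?_
  rw [add_pow_char, add_mul]

lemma repset_zero : (0 : S) ∈ RepSet p y :=
  ⟨0, by simp [zero_pow (Fact.out (p := p.Prime)).ne_zero]⟩

lemma repset_sum {ι : Type*} (s : Finset ι) (g : ι → S) (h : ∀ i ∈ s, g i ∈ RepSet p y) :
    (∑ i ∈ s, g i) ∈ RepSet p y :=
  Finset.sum_induction g (· ∈ RepSet p y) (fun _ _ => repset_add p y) (repset_zero p y) h

lemma repset_neg {s : S} (hs : s ∈ RepSet p y) : -s ∈ RepSet p y := by
  obtain ⟨c, rfl⟩ := hs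
  refine ⟨fun e => -c e, ?_⟩
  rw [← Finset.sum_neg_distrib]
  refine Finset.sum_congr rfl fun e _ => ?_
  have : (-c e) ^ p = -(c e ^ p) := by
    simpa [frobenius_def] using map_neg (frobenius S p) (c e)
  rw [this, neg_mul]

lemma prod_y_mul (g f : Fin m → Fin p) :
    (∏ j, y j ^ (g j : ℕ)) * ∏ j, y j ^ (f j : ℕ) =
      (∏ j, y j ^ (((g j : ℕ) + f j) / p)) ^ p *
        ∏ j, y j ^ ((((g j : ℕ) + f j) % p : ℕ)) := by
  rw [← Finset.prod_mul_distrib, ← Finset.prod_pow, ← Finset.prod_mul_distrib]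
  refine Finset.prod_congr rfl fun j _ => ?_
  rw [← pow_add, ← pow_mul, ← pow_add, mul_comm _ p, Nat.div_add_mod]

lemma repset_mono_mul (b : S) (g : Fin m → Fin p) {t : S} (ht : t ∈ RepSet p y) :
    b ^ p * (∏ j, y j ^ (g j : ℕ)) * t ∈ RepSet p y := by
  obtain ⟨d, rfl⟩ := ht
  rw [Finset.mul_sum]
  refine repset_sum p y _ _ fun f _ => ?_
  have hp : 0 < p := (Fact.out (p := p.Prime)).pos
  have : b ^ p * (∏ j, y j ^ (g j : ℕ)) * (d f ^ p * ∏ j, y j ^ (f j : ℕ))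
      = (b * d f * ∏ j, y j ^ (((g j : ℕ) + f j) / p)) ^ p *
        ∏ j, y j ^ (((g j : ℕ) + (f j : ℕ)) % p) := by
    calc b ^ p * (∏ j, y j ^ (g j : ℕ)) * (d f ^ p * ∏ j, y j ^ (f j : ℕ))
        = b ^ p * d f ^ p * ((∏ j, y j ^ (g j : ℕ)) * ∏ j, y j ^ (f j : ℕ)) := by ring
      _ = _ := by rw [prod_y_mul p y g f]; rw [mul_pow, mul_pow]; ring
  rw [this]
  have := repset_single p y (b * d f * ∏ j, y j ^ (((g j : ℕ) + f j) / p))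
    (fun j => ⟨((g j : ℕ) + f j) % p, Nat.mod_lt _ hp⟩)
  simpa using this

lemma repset_mul {s t : S} (hs : s ∈ RepSet p y) (ht : t ∈ RepSet p y) :
    s * t ∈ RepSet p y := by
  obtain ⟨c, rfl⟩ := hs
  rw [Finset.sum_mul]
  refine repset_sum p y _ _ fun e _ => ?_
  rw [mul_assoc]
  rw [← mul_assoc (c e ^ p)]
  exact repset_mono_mul p y (c e) e ht

lemma repset_one : (1 : S) ∈ RepSet p y := by
  have := repset_single p y 1 (fun _ => 0)
  simpa using this

lemma rep_lemma (hgenS : Subring.closure (Set.range (fun s : S => s ^ p) ∪ Set.range y) = ⊤)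
    (s : S) : s ∈ RepSet p y := by
  have hmem : s ∈ Subring.closure (Set.range (fun s : S => s ^ p) ∪ Set.range y) := by
    rw [hgenS]; trivial
  induction hmem using Subring.closure_induction with
  | mem z hz =>
      rcases hz with ⟨r, rfl⟩ | ⟨j, rfl⟩
      · have := repset_single p y r (fun _ => 0)
        simpa using this
      · have hp1 : 1 < p := (Fact.out (p := p.Prime)).one_lt
        have := repset_single p y 1 (fun k => if k = j then (⟨1, hp1⟩ : Fin p) else 0)
        classical
        simpa [Finset.prod_ite_eq', apply_ite (fun t : Fin p => (t : ℕ))] using this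
  | zero => exact repset_zero p y
  | one => exact repset_one p y
  | add a b _ _ ha hb => exact repset_add p y ha hb
  | neg a _ ha => exact repset_neg p y ha
  | mul a b _ _ ha hb => exact repset_mul p y ha hb

end Rep

section Frob

variable {R : Type*} [CommRing R] (p : ℕ) [Fact p.Prime] [CharP R p]
  {n : ℕ} (x : Fin n → R) (I : Ideal (MvPolynomial (Fin n) R))
  (hI : I = Ideal.span (Set.range fun i => MvPolynomial.X i ^ p - MvPolynomial.C (x i)))
  (φ : (MvPolynomial (Fin n) R ⧸ I) →+* R)
  (hφC : ∀ r : R, φ (Ideal.Quotient.mk I (MvPolynomial.C r)) = r ^ p)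
  (hφX : ∀ i : Fin n, φ (Ideal.Quotient.mk I (MvPolynomial.X i)) = x i)

include hI hφC hφX in
lemma pow_p_eq (z : MvPolynomial (Fin n) R ⧸ I) :
    z ^ p = Ideal.Quotient.mk I (MvPolynomial.C (φ z)) := by
  obtain ⟨q, rfl⟩ := Ideal.Quotient.mk_surjective z
  have key : (Ideal.Quotient.mk I).comp (frobenius (MvPolynomial (Fin n) R) p) =
      ((Ideal.Quotient.mk I).comp (MvPolynomial.C : R →+* MvPolynomial (Fin n) R)).comp
        (φ.comp (Ideal.Quotient.mk I)) := by
    apply MvPolynomial.ringHom_ext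
    · intro r
      simp [RingHom.comp_apply, frobenius_def, hφC, map_pow]
    · intro i
      simp only [RingHom.comp_apply, frobenius_def]
      rw [hφX]
      have hmem : (MvPolynomial.X i ^ p - MvPolynomial.C (x i) : MvPolynomial (Fin n) R) ∈ I := by
        rw [hI]; exact Ideal.subset_span ⟨i, rfl⟩
      have h0 : Ideal.Quotient.mk I (MvPolynomial.X i ^ p - MvPolynomial.C (x i)) = 0 :=
        (Ideal.Quotient.eq_zero_iff_mem).mpr hmem
      rw [map_sub, sub_eq_zero] at h0
      exact h0
  have := congrArg (fun f => f q) key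
  simpa [frobenius_def] using this

end Frob

lemma wfun_reduced {R : Type*} [CommRing R] (p : ℕ) {n : ℕ} (x : Fin n → R)
    (f : Fin n → ℕ) (a : Fin n →₀ ℕ) (ha : ∀ i, a i < p) :
    wfun p x f a = if (∀ i, a i = f i) then 1 else 0 := by
  classical
  unfold wfun
  have hiff : (∀ i, a i % p = f i) ↔ (∀ i, a i = f i) := by
    constructor
    · intro h i; rw [← Nat.mod_eq_of_lt (ha i)]; exact h i
    · intro h i; rw [Nat.mod_eq_of_lt (ha i)]; exact h i
  rw [if_congr hiff rfl rfl]
  split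
  · refine Finset.prod_eq_one fun i _ => ?_
    rw [Nat.div_eq_of_lt (ha i), pow_zero]
  · rfl

lemma prod_univ_X_pow {R : Type*} [CommRing R] {n : ℕ} (a : Fin n →₀ ℕ) :
    ∏ i, (X i : MvPolynomial (Fin n) R) ^ a i = monomial a 1 := by
  rw [← MvPolynomial.prod_X_pow_eq_monomial]
  exact (Finset.prod_subset (Finset.subset_univ _) fun i _ hi => by
    simp [Finsupp.notMem_support_iff.mp hi]).symm

/-- Let `R` be of characteristic `p` with `p`-generating set `x`, let
`R' = R[X]/(X_i^p − x_i)` with classes `x'_i = X̄_i` and the map `φ : R' → R` of Gabber's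
construction.  If `ψ : S → R'` is a ring map from a ring `S` with `p`-generating set
`y = y_1, …, y_m` which `ψ` maps bijectively onto the `p`-basis `x'` of `R'`, then
`ker ψ = (ker (φ ∘ ψ))^{[p]}`, the ideal generated by `p`-th powers of elements of
`ker (φ ∘ ψ)`. -/
theorem gabber_first_step_ker_frobenius_power {R S : Type*} [CommRing R] [CommRing S]
    (p : ℕ) [Fact p.Prime] [CharP R p] [CharP S p]
    (n m : ℕ) (x : Fin n → R)
    (hgenR : Subring.closure (Set.range (fun r : R => r ^ p) ∪ Set.range x) = ⊤)
    (I : Ideal (MvPolynomial (Fin n) R))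
    (hI : I = Ideal.span (Set.range fun i => MvPolynomial.X i ^ p - MvPolynomial.C (x i)))
    (φ : (MvPolynomial (Fin n) R ⧸ I) →+* R)
    (hφC : ∀ r : R, φ (Ideal.Quotient.mk I (MvPolynomial.C r)) = r ^ p)
    (hφX : ∀ i : Fin n, φ (Ideal.Quotient.mk I (MvPolynomial.X i)) = x i)
    (y : Fin m → S)
    (hgenS : Subring.closure (Set.range (fun s : S => s ^ p) ∪ Set.range y) = ⊤)
    (ψ : S →+* (MvPolynomial (Fin n) R ⧸ I)) (σ : Fin m ≃ Fin n)
    (hψ : ∀ j : Fin m, ψ (y j) = Ideal.Quotient.mk I (MvPolynomial.X (σ j))) :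
    RingHom.ker ψ =
      Ideal.span ((fun a : S => a ^ p) '' (RingHom.ker (φ.comp ψ) : Set S)) := by
  classical
  have hp : 0 < p := (Fact.out (p := p.Prime)).pos
  apply le_antisymm
  · -- hard direction
    intro s hs
    rw [RingHom.mem_ker] at hs
    obtain ⟨c, rfl⟩ := rep_lemma p y hgenS s
    -- coefficients
    set r : (Fin m → Fin p) → R := fun e => φ (ψ (c e)) with hr
    set a : (Fin m → Fin p) → (Fin n →₀ ℕ) :=
      fun e => Finsupp.equivFunOnFinite.symm (fun i => ((e (σ.symm i) : ℕ))) with ha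
    have ha_apply : ∀ e i, a e i = (e (σ.symm i) : ℕ) := by
      intro e i; simp [ha, Finsupp.equivFunOnFinite]
    set P : MvPolynomial (Fin n) R := ∑ e : Fin m → Fin p, monomial (a e) (r e) with hP
    have hψs : ψ (∑ e : Fin m → Fin p, c e ^ p * ∏ j, y j ^ ((e j : ℕ)))
        = Ideal.Quotient.mk I P := by
      rw [map_sum, hP, map_sum]
      refine Finset.sum_congr rfl fun e _ => ?_
      rw [map_mul, map_pow, pow_p_eq p x I hI φ hφC hφX, map_prod]
      have h1 : ∀ j, ψ (y j ^ ((e j : ℕ)))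
          = Ideal.Quotient.mk I (X (σ j) ^ ((e j : ℕ))) := by
        intro j; rw [map_pow, hψ j, map_pow]
      rw [Finset.prod_congr rfl fun j _ => h1 j, ← map_prod, ← map_mul]
      congr 1
      have h2 : (∏ j, (X (σ j) : MvPolynomial (Fin n) R) ^ ((e j : ℕ)))
          = ∏ i, (X i : MvPolynomial (Fin n) R) ^ a e i := by
        rw [← Equiv.prod_comp σ (fun i => (X i : MvPolynomial (Fin n) R) ^ a e i)]
        refine Finset.prod_congr rfl fun j _ => ?_
        rw [ha_apply, Equiv.symm_apply_apply]
      rw [h2, prod_univ_X_pow, MvPolynomial.C_mul_monomial, mul_one]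
    have hPI : P ∈ Ideal.span (Set.range fun i => X i ^ p - MvPolynomial.C (x i)) := by
      rw [← hI, ← Ideal.Quotient.eq_zero_iff_mem, ← hψs, hs]
    have hr0 : ∀ e, r e = 0 := by
      intro e₀
      have hL := Lf_mem_span p x hp (fun i => ((e₀ (σ.symm i) : ℕ))) hPI
      rw [hP, map_sum] at hL
      have heval : ∀ e : Fin m → Fin p,
          Lf p x (fun i => ((e₀ (σ.symm i) : ℕ))) (monomial (a e) (r e))
            = if e = e₀ then r e else 0 := by
        intro e
        rw [Lf_monomial, wfun_reduced p x _ _ (fun i => by rw [ha_apply]; exact (e (σ.symm i)).2)]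
        have hcond : (∀ i, a e i = (e₀ (σ.symm i) : ℕ)) ↔ e = e₀ := by
          constructor
          · intro h
            funext j
            have := h (σ j)
            rw [ha_apply, Equiv.symm_apply_apply] at this
            exact Fin.val_injective this
          · rintro rfl i; rw [ha_apply]
        rw [if_congr hcond rfl rfl]
        split <;> simp
      rw [Finset.sum_congr rfl fun e _ => heval e, Finset.sum_ite_eq' Finset.univ e₀] at hL
      simpa using hL
    refine Ideal.sum_mem _ fun e _ => ?_
    refine Ideal.mul_mem_right _ _ ?_
    refine Ideal.subset_span ⟨c e, ?_, rfl⟩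
    rw [SetLike.mem_coe, RingHom.mem_ker, RingHom.comp_apply]
    exact hr0 e
  · rw [Ideal.span_le]
    rintro _ ⟨t, ht, rfl⟩
    rw [SetLike.mem_coe, RingHom.mem_ker] at ht ⊢
    rw [RingHom.comp_apply] at ht
    rw [map_pow, pow_p_eq p x I hI φ hφC hφX, ht, map_zero, map_zero]
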